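/- arXiv:2403.19703 — 2 statements merged into one kernel-verified Lean document; each statement's English description precedes it below -/
import Mathlib

section
/- (Fubini, version I) Let R ⊂ ℝⁿ and S ⊂ ℝᵐ be closed rectangles, and f : R × S → ℝ Riemann integrable. Define g(x) as the lower Darboux integral of y ↦ f(x,y) over S, and h(x) as the corresponding upper Darboux integral. Then g and h are Riemann integrable over R and ∫_R g = ∫_R h = ∫_{R×S} f. -/
/-- A partition of the interval `[a, b]`: finitely many points
`a = x₀ < x₁ < ⋯ < xₙ = b`. -/
structure Partition1 (a b : ℝ) where
  n : ℕ
  pts : Fin (n + 1) → ℝ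
  mono : StrictMono pts
  first : pts 0 = a
  last : pts (Fin.last n) = b

/-- Lower Darboux sum `L(f, P) = Σ mᵢ Δxᵢ`. -/
noncomputable def Partition1.lowerSum {a b : ℝ} (f : ℝ → ℝ) (P : Partition1 a b) : ℝ :=
  ∑ i : Fin P.n, sInf (f '' Set.Icc (P.pts i.castSucc) (P.pts i.succ)) *
    (P.pts i.succ - P.pts i.castSucc)

/-- Upper Darboux sum `U(f, P) = Σ Mᵢ Δxᵢ`. -/
noncomputable def Partition1.upperSum {a b : ℝ} (f : ℝ → ℝ) (P : Partition1 a b) : ℝ :=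
  ∑ i : Fin P.n, sSup (f '' Set.Icc (P.pts i.castSucc) (P.pts i.succ)) *
    (P.pts i.succ - P.pts i.castSucc)

/-- The closed rectangle `Π [lo i, hi i]` as a subset of `ι → ℝ`. -/
def Rect {ι : Type} (lo hi : ι → ℝ) : Set (ι → ℝ) :=
  {x | ∀ i, x i ∈ Set.Icc (lo i) (hi i)}

/-- The `n`-dimensional volume `Π (hi i - lo i)` of a rectangle. -/
def vol {ι : Type} [Fintype ι] (lo hi : ι → ℝ) : ℝ := ∏ i, (hi i - lo i)

/-- A partition of the rectangle `Π [lo i, hi i]`: a partition of each side. -/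
def PartitionN {ι : Type} (lo hi : ι → ℝ) : Type :=
  ∀ i, Partition1 (lo i) (hi i)

/-- The lower-left corner of the subrectangle of `P` indexed by `J`. -/
def subLo {ι : Type} {lo hi : ι → ℝ} (P : PartitionN lo hi)
    (J : ∀ i, Fin (P i).n) : ι → ℝ := fun i => (P i).pts (J i).castSucc

/-- The upper-right corner of the subrectangle of `P` indexed by `J`. -/
def subHi {ι : Type} {lo hi : ι → ℝ} (P : PartitionN lo hi)
    (J : ∀ i, Fin (P i).n) : ι → ℝ := fun i => (P i).pts (J i).succ

/-- The volume of the subrectangle of `P` indexed by `J`. -/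
def subVol {ι : Type} [Fintype ι] {lo hi : ι → ℝ} (P : PartitionN lo hi)
    (J : ∀ i, Fin (P i).n) : ℝ :=
  ∏ i, ((P i).pts (J i).succ - (P i).pts (J i).castSucc)

/-- Lower Darboux sum `L(P, f) = Σ mᵢ V(Rᵢ)` over the subrectangles of `P`. -/
noncomputable def lowerSumN {ι : Type} [Fintype ι] [DecidableEq ι] {lo hi : ι → ℝ}
    (f : (ι → ℝ) → ℝ) (P : PartitionN lo hi) : ℝ :=
  ∑ J : ∀ i, Fin (P i).n, sInf (f '' Rect (subLo P J) (subHi P J)) * subVol P J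

/-- Upper Darboux sum `U(P, f) = Σ Mᵢ V(Rᵢ)` over the subrectangles of `P`. -/
noncomputable def upperSumN {ι : Type} [Fintype ι] [DecidableEq ι] {lo hi : ι → ℝ}
    (f : (ι → ℝ) → ℝ) (P : PartitionN lo hi) : ℝ :=
  ∑ J : ∀ i, Fin (P i).n, sSup (f '' Rect (subLo P J) (subHi P J)) * subVol P J

/-- Lower Darboux integral: supremum of lower sums over all partitions. -/
noncomputable def lowerIntN {ι : Type} [Fintype ι] [DecidableEq ι]
    (lo hi : ι → ℝ) (f : (ι → ℝ) → ℝ) : ℝ :=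
  sSup (Set.range fun P : PartitionN lo hi => lowerSumN f P)

/-- Upper Darboux integral: infimum of upper sums over all partitions. -/
noncomputable def upperIntN {ι : Type} [Fintype ι] [DecidableEq ι]
    (lo hi : ι → ℝ) (f : (ι → ℝ) → ℝ) : ℝ :=
  sInf (Set.range fun P : PartitionN lo hi => upperSumN f P)

/-- `f` is Riemann integrable on the rectangle when the lower and upper
Darboux integrals agree. -/
def RiemannIntN {ι : Type} [Fintype ι] [DecidableEq ι]
    (lo hi : ι → ℝ) (f : (ι → ℝ) → ℝ) : Prop :=
  lowerIntN lo hi f = upperIntN lo hi f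

/-- The Riemann integral of `f` over the rectangle (the common value of the
lower and upper Darboux integrals when `f` is integrable). -/
noncomputable def intN {ι : Type} [Fintype ι] [DecidableEq ι]
    (lo hi : ι → ℝ) (f : (ι → ℝ) → ℝ) : ℝ :=
  upperIntN lo hi f

section Aux
set_option linter.unusedSectionVars false

open Finset

theorem Partition1.pts_mem {a b : ℝ} (P : Partition1 a b) (k : Fin (P.n+1)) :
    P.pts k ∈ Set.Icc a b := by
  constructor
  · calc a = P.pts 0 := P.first.symm
      _ ≤ P.pts k := P.mono.monotone (Fin.zero_le k)
  · calc P.pts k ≤ P.pts (Fin.last P.n) := P.mono.monotone (Fin.le_last k)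
      _ = b := P.last

theorem nonempty_partition1 {a b : ℝ} (h : a ≤ b) : Nonempty (Partition1 a b) := by
  rcases eq_or_lt_of_le h with he | hl
  · refine ⟨⟨0, fun _ => a, ?_, rfl, he ▸ rfl⟩⟩
    intro i j hij
    have h1 := i.2; have h2 := j.2; have h3 := Fin.lt_def.mp hij
    omega
  · refine ⟨⟨1, fun i => if i = 0 then a else b, ?_, by simp, by simp [Fin.ext_iff, Fin.last]⟩⟩
    intro i j hij
    fin_cases i <;> fin_cases j <;> simp_all

theorem nonempty_partitionN {ι : Type} {lo hi : ι → ℝ} (h : ∀ i, lo i ≤ hi i) :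
    Nonempty (PartitionN lo hi) :=
  ⟨fun i => (nonempty_partition1 (h i)).some⟩

variable {ι : Type} [Fintype ι] [DecidableEq ι] {lo hi : ι → ℝ}

theorem subLo_le_subHi (P : PartitionN lo hi) (J : ∀ i, Fin (P i).n) (i : ι) :
    subLo P J i ≤ subHi P J i :=
  le_of_lt ((P i).mono (Fin.castSucc_lt_succ (i := J i)))

theorem subLo_mem (P : PartitionN lo hi) (J : ∀ i, Fin (P i).n) :
    subLo P J ∈ Rect (subLo P J) (subHi P J) :=
  fun i => ⟨le_refl _, subLo_le_subHi P J i⟩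

theorem rect_nonempty (P : PartitionN lo hi) (J : ∀ i, Fin (P i).n) :
    (Rect (subLo P J) (subHi P J)).Nonempty :=
  ⟨subLo P J, subLo_mem P J⟩

theorem rect_subset (P : PartitionN lo hi) (J : ∀ i, Fin (P i).n) :
    Rect (subLo P J) (subHi P J) ⊆ Rect lo hi := by
  intro x hx i
  obtain ⟨h1, h2⟩ := hx i
  exact ⟨((P i).pts_mem _).1.trans h1, h2.trans (((P i).pts_mem _).2)⟩

theorem subVol_nonneg (P : PartitionN lo hi) (J : ∀ i, Fin (P i).n) :
    0 ≤ subVol P J :=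
  Finset.prod_nonneg fun i _ => sub_nonneg.2 (le_of_lt ((P i).mono (Fin.castSucc_lt_succ (i := J i))))

theorem sum_delta {a b : ℝ} (P : Partition1 a b) :
    ∑ k : Fin P.n, (P.pts k.succ - P.pts k.castSucc) = b - a := by
  set p : ℕ → ℝ := fun t => P.pts ⟨min t P.n, by omega⟩ with hp
  have key : ∀ k : Fin P.n, P.pts k.succ - P.pts k.castSucc = p ((k : ℕ) + 1) - p (k : ℕ) := by
    intro k
    have h1 : P.pts k.succ = p ((k : ℕ) + 1) := by
      congr 1; ext; simp [hp, Nat.min_eq_left (Nat.succ_le_of_lt k.2)]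
    have h2 : P.pts k.castSucc = p (k : ℕ) := by
      congr 1; ext; simp [hp, Nat.min_eq_left (le_of_lt k.2)]
    rw [h1, h2]
  calc ∑ k : Fin P.n, (P.pts k.succ - P.pts k.castSucc)
      = ∑ k : Fin P.n, (p ((k : ℕ) + 1) - p (k : ℕ)) := by
        exact Finset.sum_congr rfl fun k _ => key k
    _ = ∑ t ∈ Finset.range P.n, (p (t + 1) - p t) :=
        Fin.sum_univ_eq_sum_range (fun t => p (t+1) - p t) P.n
    _ = p P.n - p 0 := Finset.sum_range_sub p P.n
    _ = b - a := by
        have e1 : (⟨min P.n P.n, by omega⟩ : Fin (P.n+1)) = Fin.last P.n :=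
          Fin.ext (by simp [Fin.last])
        have e2 : (⟨min 0 P.n, by omega⟩ : Fin (P.n+1)) = 0 :=
          Fin.ext (by simp)
        show P.pts ⟨min P.n P.n, by omega⟩ - P.pts ⟨min 0 P.n, by omega⟩ = b - a
        rw [e1, e2, P.last, P.first]

theorem sum_subVol (P : PartitionN lo hi) :
    ∑ J : ∀ i, Fin (P i).n, subVol P J = vol lo hi := by
  have := Finset.prod_univ_sum (fun i : ι => (Finset.univ : Finset (Fin (P i).n)))
    (fun i k => (P i).pts k.succ - (P i).pts k.castSucc)
  rw [Fintype.piFinset_univ] at this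
  rw [vol]
  calc ∑ J : ∀ i, Fin (P i).n, subVol P J
      = ∏ i, ∑ k : Fin (P i).n, ((P i).pts k.succ - (P i).pts k.castSucc) := this.symm
    _ = ∏ i, (hi i - lo i) := Finset.prod_congr rfl fun i _ => sum_delta (P i)

theorem vol_nonneg (h : ∀ i, lo i ≤ hi i) : 0 ≤ vol lo hi :=
  Finset.prod_nonneg fun i _ => sub_nonneg.2 (h i)

end Aux

section Aux2
set_option linter.unusedSectionVars false
open Finset

variable {ι : Type} [Fintype ι] [DecidableEq ι] {lo hi : ι → ℝ} {f : (ι → ℝ) → ℝ} {C : ℝ}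

theorem bddAbove_image (hb : ∀ x ∈ Rect lo hi, |f x| ≤ C) {B : Set (ι → ℝ)}
    (hB : B ⊆ Rect lo hi) : BddAbove (f '' B) := by
  refine ⟨C, ?_⟩
  rintro y ⟨x, hx, rfl⟩
  exact (abs_le.1 (hb x (hB hx))).2

theorem bddBelow_image (hb : ∀ x ∈ Rect lo hi, |f x| ≤ C) {B : Set (ι → ℝ)}
    (hB : B ⊆ Rect lo hi) : BddBelow (f '' B) := by
  refine ⟨-C, ?_⟩
  rintro y ⟨x, hx, rfl⟩
  exact (abs_le.1 (hb x (hB hx))).1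

theorem box_bounds (hb : ∀ x ∈ Rect lo hi, |f x| ≤ C) (P : PartitionN lo hi)
    (J : ∀ i, Fin (P i).n) :
    -C ≤ sInf (f '' Rect (subLo P J) (subHi P J)) ∧
    sInf (f '' Rect (subLo P J) (subHi P J)) ≤ sSup (f '' Rect (subLo P J) (subHi P J)) ∧
    sSup (f '' Rect (subLo P J) (subHi P J)) ≤ C := by
  have hsub := rect_subset P J
  have hne : (f '' Rect (subLo P J) (subHi P J)).Nonempty :=
    (rect_nonempty P J).image f
  refine ⟨le_csInf hne ?_, csInf_le_csSup hne (bddBelow_image hb hsub) (bddAbove_image hb hsub),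
    csSup_le hne ?_⟩
  · rintro y ⟨x, hx, rfl⟩
    exact (abs_le.1 (hb x (hsub hx))).1
  · rintro y ⟨x, hx, rfl⟩
    exact (abs_le.1 (hb x (hsub hx))).2

theorem lowerSumN_le_upperSumN (hb : ∀ x ∈ Rect lo hi, |f x| ≤ C) (P : PartitionN lo hi) :
    lowerSumN f P ≤ upperSumN f P :=
  Finset.sum_le_sum fun J _ =>
    mul_le_mul_of_nonneg_right (box_bounds hb P J).2.1 (subVol_nonneg P J)

theorem upperSumN_le_bound (hb : ∀ x ∈ Rect lo hi, |f x| ≤ C) (P : PartitionN lo hi) :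
    upperSumN f P ≤ C * vol lo hi := by
  rw [← sum_subVol P, Finset.mul_sum]
  exact Finset.sum_le_sum fun J _ =>
    mul_le_mul_of_nonneg_right (box_bounds hb P J).2.2 (subVol_nonneg P J)

theorem bound_le_lowerSumN (hb : ∀ x ∈ Rect lo hi, |f x| ≤ C) (P : PartitionN lo hi) :
    -(C * vol lo hi) ≤ lowerSumN f P := by
  rw [← sum_subVol P, Finset.mul_sum, ← Finset.sum_neg_distrib]
  exact Finset.sum_le_sum fun J _ => by
    rw [← neg_mul]
    exact mul_le_mul_of_nonneg_right (box_bounds hb P J).1 (subVol_nonneg P J)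

theorem lowerSumN_le_bound (hb : ∀ x ∈ Rect lo hi, |f x| ≤ C) (P : PartitionN lo hi) :
    lowerSumN f P ≤ C * vol lo hi :=
  (lowerSumN_le_upperSumN hb P).trans (upperSumN_le_bound hb P)

theorem bound_le_upperSumN (hb : ∀ x ∈ Rect lo hi, |f x| ≤ C) (P : PartitionN lo hi) :
    -(C * vol lo hi) ≤ upperSumN f P :=
  (bound_le_lowerSumN hb P).trans (lowerSumN_le_upperSumN hb P)

theorem bddAbove_lowerSums (hb : ∀ x ∈ Rect lo hi, |f x| ≤ C) :
    BddAbove (Set.range fun P : PartitionN lo hi => lowerSumN f P) := by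
  refine ⟨C * vol lo hi, ?_⟩
  rintro y ⟨P, rfl⟩
  exact lowerSumN_le_bound hb P

theorem bddBelow_upperSums (hb : ∀ x ∈ Rect lo hi, |f x| ≤ C) :
    BddBelow (Set.range fun P : PartitionN lo hi => upperSumN f P) := by
  refine ⟨-(C * vol lo hi), ?_⟩
  rintro y ⟨P, rfl⟩
  exact bound_le_upperSumN hb P

end Aux2

section Aux3
set_option linter.unusedSectionVars false
open Finset

theorem refine1 {a b : ℝ} (P Q : Partition1 a b)
    (hr : Set.range Q.pts ⊆ Set.range P.pts) :
    ∃ φ : Fin P.n → Fin Q.n,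
      (∀ k, Q.pts (φ k).castSucc ≤ P.pts k.castSucc ∧ P.pts k.succ ≤ Q.pts (φ k).succ) ∧
      (∀ j, ∑ k ∈ Finset.univ.filter (fun k => φ k = j),
          (P.pts k.succ - P.pts k.castSucc) = Q.pts j.succ - Q.pts j.castSucc) := by
  classical
  have hA : ∀ j : Fin (Q.n+1), ∃ k, P.pts k = Q.pts j := fun j => hr ⟨j, rfl⟩
  choose A hAeq using hA
  have hAmono : Monotone A := by
    intro j j' hjj
    by_contra hcon
    push_neg at hcon
    have h2 := P.mono hcon
    rw [hAeq, hAeq] at h2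
    exact absurd (Q.mono.monotone hjj) (not_le.2 h2)
  have hA0 : A 0 = 0 := by
    apply P.mono.injective
    rw [hAeq, Q.first, P.first]
  have hAlast : A (Fin.last Q.n) = Fin.last P.n := by
    apply P.mono.injective
    rw [hAeq, Q.last, P.last]
  have hQpos : ∀ _ : Fin P.n, 0 < Q.n := by
    intro k
    by_contra hcon
    push_neg at hcon
    have hq : Q.n = 0 := by omega
    have e : (Fin.last Q.n) = (0 : Fin (Q.n+1)) := Fin.ext (by simp [Fin.last, hq])
    have e2 : Fin.last P.n = 0 := by rw [← hAlast, e, hA0]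
    have e3 : P.n = 0 := by simpa [Fin.ext_iff, Fin.last] using e2
    have := k.2
    omega
  set S : Fin P.n → Finset (Fin Q.n) := fun k =>
    Finset.univ.filter (fun j => (A j.castSucc : ℕ) ≤ (k : ℕ)) with hS
  have hSne : ∀ k, (S k).Nonempty := by
    intro k
    refine ⟨⟨0, hQpos k⟩, ?_⟩
    simp only [hS, Finset.mem_filter, Finset.mem_univ, true_and]
    have e : (⟨0, hQpos k⟩ : Fin Q.n).castSucc = (0 : Fin (Q.n+1)) := rfl
    rw [e, hA0]
    exact Nat.zero_le _
  set φ : Fin P.n → Fin Q.n := fun k => (S k).max' (hSne k) with hφ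
  -- the defining interval property of φ
  have key : ∀ (k : Fin P.n) (j : Fin Q.n),
      φ k = j ↔ ((A j.castSucc : ℕ) ≤ (k : ℕ) ∧ (k : ℕ) < (A j.succ : ℕ)) := by
    intro k j
    have hmem : φ k ∈ S k := (S k).max'_mem (hSne k)
    have h1 : (A (φ k).castSucc : ℕ) ≤ (k : ℕ) := by
      simpa only [hS, Finset.mem_filter, Finset.mem_univ, true_and] using hmem
    have h2 : (k : ℕ) < (A (φ k).succ : ℕ) := by
      by_cases hlast : ((φ k : ℕ) + 1 = Q.n)
      · have e : (φ k).succ = Fin.last Q.n := Fin.ext (by simp [Fin.last, hlast])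
        rw [e, hAlast]
        simpa [Fin.last] using k.2
      · have hlt : (φ k : ℕ) + 1 < Q.n := by have := (φ k).2; omega
        set j' : Fin Q.n := ⟨(φ k : ℕ) + 1, hlt⟩ with hj'
        have hnot : j' ∉ S k := by
          intro hin
          have hle2 : j' ≤ φ k := (S k).le_max' j' hin
          have hv := Fin.le_def.mp hle2
          simp [hj'] at hv
        have : ¬ ((A j'.castSucc : ℕ) ≤ (k : ℕ)) := by
          intro hcon
          exact hnot (by simp only [hS, Finset.mem_filter, Finset.mem_univ, true_and]; exact hcon)
        have e : j'.castSucc = (φ k).succ := Fin.ext (by simp [hj'])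
        rw [e] at this
        omega
    constructor
    · rintro rfl
      exact ⟨h1, h2⟩
    · rintro ⟨hj1, hj2⟩
      have hjS : j ∈ S k := by
        simp only [hS, Finset.mem_filter, Finset.mem_univ, true_and]; exact hj1
      have hle : j ≤ φ k := (S k).le_max' j hjS
      rcases eq_or_lt_of_le hle with heq | hlt
      · exact heq.symm
      · exfalso
        have hsle : j.succ ≤ (φ k).castSucc := by
          rw [Fin.le_def]
          simpa using Fin.lt_def.mp hlt
        have := hAmono hsle
        have hv := Fin.le_def.mp this
        omega
  refine ⟨φ, ?_, ?_⟩
  · intro k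
    obtain ⟨h1, h2⟩ := (key k (φ k)).mp rfl
    constructor
    · rw [← hAeq]
      exact P.mono.monotone (Fin.le_def.mpr (by simpa using h1))
    · rw [← hAeq]
      exact P.mono.monotone (Fin.le_def.mpr (by simpa using h2))
  · intro j
    set α : ℕ := (A j.castSucc : ℕ) with hα
    set β : ℕ := (A j.succ : ℕ) with hβ
    have hαβ : α ≤ β := Fin.le_def.mp (hAmono (Fin.castSucc_le_succ j))
    have hβn : β ≤ P.n := by have := (A j.succ).2; omega
    set p : ℕ → ℝ := fun t => P.pts ⟨min t P.n, by omega⟩ with hp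
    have hΔ : ∀ k : Fin P.n, P.pts k.succ - P.pts k.castSucc = p ((k : ℕ) + 1) - p (k : ℕ) := by
      intro k
      have e1 : P.pts k.succ = p ((k : ℕ) + 1) := by
        congr 1
        exact Fin.ext (by simp [hp, Nat.min_eq_left (Nat.succ_le_of_lt k.2)])
      have e2 : P.pts k.castSucc = p (k : ℕ) := by
        congr 1
        exact Fin.ext (by simp [hp, Nat.min_eq_left (le_of_lt k.2)])
      rw [e1, e2]
    calc ∑ k ∈ Finset.univ.filter (fun k => φ k = j), (P.pts k.succ - P.pts k.castSucc)
        = ∑ k : Fin P.n, if φ k = j then P.pts k.succ - P.pts k.castSucc else 0 :=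
          Finset.sum_filter _ _
      _ = ∑ k : Fin P.n, (fun t : ℕ => if α ≤ t ∧ t < β then p (t + 1) - p t else 0) (k : ℕ) := by
          refine Finset.sum_congr rfl fun k _ => ?_
          simp only
          by_cases hc : φ k = j
          · rw [if_pos hc, if_pos ((key k j).mp hc), hΔ k]
          · rw [if_neg hc, if_neg (fun hcon => hc ((key k j).mpr hcon))]
      _ = ∑ t ∈ Finset.range P.n, (if α ≤ t ∧ t < β then p (t + 1) - p t else 0) := by
          exact Fin.sum_univ_eq_sum_range (fun t : ℕ => if α ≤ t ∧ t < β then p (t + 1) - p t else 0) P.n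
      _ = ∑ t ∈ (Finset.range P.n).filter (fun t => α ≤ t ∧ t < β), (p (t + 1) - p t) :=
          (Finset.sum_filter _ _).symm
      _ = ∑ t ∈ Finset.Ico α β, (p (t + 1) - p t) := by
          refine Finset.sum_congr ?_ fun _ _ => rfl
          ext t
          simp only [Finset.mem_filter, Finset.mem_range, Finset.mem_Ico]
          omega
      _ = (∑ t ∈ Finset.range β, (p (t + 1) - p t)) -
            ∑ t ∈ Finset.range α, (p (t + 1) - p t) := by
          rw [Finset.sum_Ico_eq_sub _ hαβ]
      _ = p β - p α := by rw [Finset.sum_range_sub, Finset.sum_range_sub]; ring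
      _ = Q.pts j.succ - Q.pts j.castSucc := by
          have e1 : p β = Q.pts j.succ := by
            have e : (⟨min β P.n, by omega⟩ : Fin (P.n+1)) = A j.succ :=
              Fin.ext (by rw [Fin.val_mk, Nat.min_eq_left hβn])
            calc p β = P.pts (⟨min β P.n, by omega⟩ : Fin (P.n+1)) := rfl
              _ = P.pts (A j.succ) := by rw [e]
              _ = Q.pts j.succ := hAeq _
          have e2 : p α = Q.pts j.castSucc := by
            have e : (⟨min α P.n, by omega⟩ : Fin (P.n+1)) = A j.castSucc :=
              Fin.ext (by rw [Fin.val_mk, Nat.min_eq_left (hαβ.trans hβn)])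
            calc p α = P.pts (⟨min α P.n, by omega⟩ : Fin (P.n+1)) := rfl
              _ = P.pts (A j.castSucc) := by rw [e]
              _ = Q.pts j.castSucc := hAeq _
          rw [e1, e2]

end Aux3

section Aux4
set_option linter.unusedSectionVars false
open Finset

variable {ι : Type} [Fintype ι] [DecidableEq ι] {lo hi : ι → ℝ} {f : (ι → ℝ) → ℝ} {C : ℝ}

theorem fiber_vol (P Q : PartitionN lo hi) (φ : ∀ i, Fin ((P i).n) → Fin ((Q i).n))
    (hfib : ∀ i j, ∑ k ∈ Finset.univ.filter (fun k => φ i k = j),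
      ((P i).pts k.succ - (P i).pts k.castSucc) = (Q i).pts j.succ - (Q i).pts j.castSucc)
    (J : ∀ i, Fin (Q i).n) :
    ∑ J' ∈ Finset.univ.filter (fun J' : ∀ i, Fin (P i).n => (fun i => φ i (J' i)) = J),
      subVol P J' = subVol Q J := by
  have hset : Finset.univ.filter (fun J' : ∀ i, Fin (P i).n => (fun i => φ i (J' i)) = J)
      = Fintype.piFinset (fun i => Finset.univ.filter (fun k => φ i k = J i)) := by
    ext J'
    simp [Fintype.mem_piFinset, funext_iff]
  rw [hset]
  simp only [subVol]
  rw [← Finset.prod_univ_sum (fun i => Finset.univ.filter (fun k => φ i k = J i))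
    (fun i k => (P i).pts k.succ - (P i).pts k.castSucc)]
  exact Finset.prod_congr rfl fun i _ => hfib i (J i)

theorem lowerSumN_le_of_refine (hb : ∀ x ∈ Rect lo hi, |f x| ≤ C) (P Q : PartitionN lo hi)
    (hr : ∀ i, Set.range (Q i).pts ⊆ Set.range (P i).pts) :
    lowerSumN f Q ≤ lowerSumN f P := by
  classical
  choose φ hpt hfib using fun i => refine1 (P i) (Q i) (hr i)
  set Φ : (∀ i, Fin (P i).n) → (∀ i, Fin (Q i).n) := fun J' i => φ i (J' i) with hΦ
  have hsub : ∀ J', Rect (subLo P J') (subHi P J') ⊆ Rect (subLo Q (Φ J')) (subHi Q (Φ J')) := by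
    intro J' x hx i
    obtain ⟨h1, h2⟩ := hx i
    exact ⟨(hpt i (J' i)).1.trans h1, h2.trans (hpt i (J' i)).2⟩
  have hinf : ∀ J', sInf (f '' Rect (subLo Q (Φ J')) (subHi Q (Φ J')))
      ≤ sInf (f '' Rect (subLo P J') (subHi P J')) := fun J' =>
    csInf_le_csInf (bddBelow_image hb (rect_subset Q _))
      ((rect_nonempty P J').image f) (Set.image_mono (hsub J'))
  calc lowerSumN f Q
      = ∑ J : ∀ i, Fin (Q i).n, ∑ J' ∈ Finset.univ.filter (fun J' => Φ J' = J),
          sInf (f '' Rect (subLo Q J) (subHi Q J)) * subVol P J' := by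
        refine Finset.sum_congr rfl fun J _ => ?_
        rw [← Finset.mul_sum, fiber_vol P Q φ hfib J]
    _ ≤ ∑ J : ∀ i, Fin (Q i).n, ∑ J' ∈ Finset.univ.filter (fun J' => Φ J' = J),
          sInf (f '' Rect (subLo P J') (subHi P J')) * subVol P J' := by
        refine Finset.sum_le_sum fun J _ => Finset.sum_le_sum fun J' hJ' => ?_
        have hJ : Φ J' = J := (Finset.mem_filter.mp hJ').2
        rw [← hJ]
        exact mul_le_mul_of_nonneg_right (hinf J') (subVol_nonneg P J')
    _ = lowerSumN f P :=
        Finset.sum_fiberwise Finset.univ Φ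
          (fun J' => sInf (f '' Rect (subLo P J') (subHi P J')) * subVol P J')

theorem upperSumN_le_of_refine (hb : ∀ x ∈ Rect lo hi, |f x| ≤ C) (P Q : PartitionN lo hi)
    (hr : ∀ i, Set.range (Q i).pts ⊆ Set.range (P i).pts) :
    upperSumN f P ≤ upperSumN f Q := by
  classical
  choose φ hpt hfib using fun i => refine1 (P i) (Q i) (hr i)
  set Φ : (∀ i, Fin (P i).n) → (∀ i, Fin (Q i).n) := fun J' i => φ i (J' i) with hΦ
  have hsub : ∀ J', Rect (subLo P J') (subHi P J') ⊆ Rect (subLo Q (Φ J')) (subHi Q (Φ J')) := by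
    intro J' x hx i
    obtain ⟨h1, h2⟩ := hx i
    exact ⟨(hpt i (J' i)).1.trans h1, h2.trans (hpt i (J' i)).2⟩
  have hsup : ∀ J', sSup (f '' Rect (subLo P J') (subHi P J'))
      ≤ sSup (f '' Rect (subLo Q (Φ J')) (subHi Q (Φ J'))) := fun J' =>
    csSup_le_csSup (bddAbove_image hb (rect_subset Q _))
      ((rect_nonempty P J').image f) (Set.image_mono (hsub J'))
  calc upperSumN f P
      = ∑ J : ∀ i, Fin (Q i).n, ∑ J' ∈ Finset.univ.filter (fun J' => Φ J' = J),
          sSup (f '' Rect (subLo P J') (subHi P J')) * subVol P J' :=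
        (Finset.sum_fiberwise Finset.univ Φ _).symm
    _ ≤ ∑ J : ∀ i, Fin (Q i).n, ∑ J' ∈ Finset.univ.filter (fun J' => Φ J' = J),
          sSup (f '' Rect (subLo Q J) (subHi Q J)) * subVol P J' := by
        refine Finset.sum_le_sum fun J _ => Finset.sum_le_sum fun J' hJ' => ?_
        have hJ : Φ J' = J := (Finset.mem_filter.mp hJ').2
        rw [← hJ]
        exact mul_le_mul_of_nonneg_right (hsup J') (subVol_nonneg P J')
    _ = upperSumN f Q := by
        refine Finset.sum_congr rfl fun J _ => ?_
        rw [← Finset.mul_sum, fiber_vol P Q φ hfib J]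

theorem exists_merge {a b : ℝ} (P Q : Partition1 a b) :
    ∃ R : Partition1 a b, Set.range P.pts ⊆ Set.range R.pts ∧
      Set.range Q.pts ⊆ Set.range R.pts := by
  classical
  set s : Finset ℝ := Finset.univ.image P.pts ∪ Finset.univ.image Q.pts with hs
  have hmemP : ∀ k, P.pts k ∈ s := fun k => by
    simp only [hs, Finset.mem_union, Finset.mem_image]
    exact Or.inl ⟨k, Finset.mem_univ k, rfl⟩
  have hmemQ : ∀ k, Q.pts k ∈ s := fun k => by
    simp only [hs, Finset.mem_union, Finset.mem_image]
    exact Or.inr ⟨k, Finset.mem_univ k, rfl⟩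
  have hbound : ∀ x ∈ s, x ∈ Set.Icc a b := by
    intro x hx
    simp only [hs, Finset.mem_union, Finset.mem_image] at hx
    rcases hx with ⟨k, _, rfl⟩ | ⟨k, _, rfl⟩
    · exact P.pts_mem k
    · exact Q.pts_mem k
  have hne : s.Nonempty := ⟨P.pts 0, hmemP 0⟩
  have hcard : s.card = (s.card - 1) + 1 := by
    have := Finset.card_pos.mpr hne; omega
  set e := s.orderIsoOfFin hcard with he
  have hesurj : ∀ x ∈ s, ∃ j, (e j : ℝ) = x := by
    intro x hx
    exact ⟨e.symm ⟨x, hx⟩, by simp⟩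
  have hemem : ∀ j, (e j : ℝ) ∈ s := fun j => (e j).2
  refine ⟨⟨s.card - 1, fun k => (e k : ℝ), ?_, ?_, ?_⟩, ?_, ?_⟩
  · intro i j hij
    exact_mod_cast e.strictMono hij
  · -- first
    obtain ⟨j0, hj0⟩ := hesurj a (P.first ▸ hmemP 0)
    have h1 : (e 0 : ℝ) ≤ a := hj0 ▸ Subtype.coe_le_coe.mpr (e.monotone (Fin.zero_le j0))
    have h2 : a ≤ (e 0 : ℝ) := (hbound _ (hemem 0)).1
    exact le_antisymm h1 h2
  · -- last
    obtain ⟨j0, hj0⟩ := hesurj b (P.last ▸ hmemP (Fin.last P.n))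
    have h1 : b ≤ (e (Fin.last (s.card - 1)) : ℝ) :=
      hj0 ▸ Subtype.coe_le_coe.mpr (e.monotone (Fin.le_last j0))
    have h2 : (e (Fin.last (s.card - 1)) : ℝ) ≤ b := (hbound _ (hemem _)).2
    exact le_antisymm h2 h1
  · rintro x ⟨k, rfl⟩
    exact hesurj (P.pts k) (hmemP k)
  · rintro x ⟨k, rfl⟩
    exact hesurj (Q.pts k) (hmemQ k)

theorem exists_common_refine (P Q : PartitionN lo hi) :
    ∃ R : PartitionN lo hi, (∀ i, Set.range (P i).pts ⊆ Set.range (R i).pts) ∧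
      (∀ i, Set.range (Q i).pts ⊆ Set.range (R i).pts) := by
  choose R h1 h2 using fun i => exists_merge (P i) (Q i)
  exact ⟨R, h1, h2⟩

theorem lowerSumN_le_upperSumN_any (hb : ∀ x ∈ Rect lo hi, |f x| ≤ C)
    (P Q : PartitionN lo hi) : lowerSumN f P ≤ upperSumN f Q := by
  obtain ⟨R, h1, h2⟩ := exists_common_refine P Q
  exact (lowerSumN_le_of_refine hb R P h1).trans
    ((lowerSumN_le_upperSumN hb R).trans (upperSumN_le_of_refine hb R Q h2))

theorem lowerIntN_le_upperIntN (hlo : ∀ i, lo i ≤ hi i)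
    (hb : ∀ x ∈ Rect lo hi, |f x| ≤ C) : lowerIntN lo hi f ≤ upperIntN lo hi f := by
  obtain ⟨P0⟩ := nonempty_partitionN hlo
  refine csSup_le ⟨_, ⟨P0, rfl⟩⟩ ?_
  rintro y ⟨P, rfl⟩
  refine le_csInf ⟨_, ⟨P0, rfl⟩⟩ ?_
  rintro z ⟨Q, rfl⟩
  exact lowerSumN_le_upperSumN_any hb P Q

end Aux4

section Aux5
set_option linter.unusedSectionVars false
open Finset

variable {κ₁ κ₂ : Type} [Fintype κ₁] [Fintype κ₂] [DecidableEq κ₁] [DecidableEq κ₂]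
  {lo hi : κ₁ ⊕ κ₂ → ℝ}

def restL (P : PartitionN lo hi) : PartitionN (lo ∘ Sum.inl) (hi ∘ Sum.inl) :=
  fun a => P (Sum.inl a)

def restR (P : PartitionN lo hi) : PartitionN (lo ∘ Sum.inr) (hi ∘ Sum.inr) :=
  fun b => P (Sum.inr b)

def comb (P : PartitionN lo hi) (J₁ : ∀ a, Fin ((P (Sum.inl a)).n))
    (J₂ : ∀ b, Fin ((P (Sum.inr b)).n)) : ∀ i, Fin ((P i).n) := fun i =>
  match i with
  | Sum.inl a => J₁ a
  | Sum.inr b => J₂ b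

theorem sum_comb (P : PartitionN lo hi) (F : (∀ i, Fin ((P i).n)) → ℝ) :
    ∑ J : ∀ i, Fin ((P i).n), F J =
      ∑ J₁ : ∀ a, Fin ((P (Sum.inl a)).n), ∑ J₂ : ∀ b, Fin ((P (Sum.inr b)).n),
        F (comb P J₁ J₂) := by
  classical
  have h1 := Equiv.sum_comp (Equiv.sumPiEquivProdPi fun i => Fin ((P i).n)).symm F
  rw [← h1, Fintype.sum_prod_type]
  refine Finset.sum_congr rfl fun J₁ _ => Finset.sum_congr rfl fun J₂ _ => ?_
  refine congrArg F (funext fun i => ?_)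
  cases i <;> rfl

theorem subVol_comb (P : PartitionN lo hi) (J₁ : ∀ a, Fin ((P (Sum.inl a)).n))
    (J₂ : ∀ b, Fin ((P (Sum.inr b)).n)) :
    subVol P (comb P J₁ J₂) = subVol (restL P) J₁ * subVol (restR P) J₂ :=
  Fintype.prod_sum_type _

theorem elim_mem_rect {x : κ₁ → ℝ} {y : κ₂ → ℝ}
    (hx : x ∈ Rect (lo ∘ Sum.inl) (hi ∘ Sum.inl))
    (hy : y ∈ Rect (lo ∘ Sum.inr) (hi ∘ Sum.inr)) :
    Sum.elim x y ∈ Rect lo hi := by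
  intro i
  cases i with
  | inl a => exact hx a
  | inr b => exact hy b

theorem elim_mem_box (P : PartitionN lo hi) {J₁ : ∀ a, Fin ((P (Sum.inl a)).n)}
    {J₂ : ∀ b, Fin ((P (Sum.inr b)).n)} {x : κ₁ → ℝ} {y : κ₂ → ℝ}
    (hx : x ∈ Rect (subLo (restL P) J₁) (subHi (restL P) J₁))
    (hy : y ∈ Rect (subLo (restR P) J₂) (subHi (restR P) J₂)) :
    Sum.elim x y ∈ Rect (subLo P (comb P J₁ J₂)) (subHi P (comb P J₁ J₂)) := by
  intro i
  cases i with
  | inl a => exact hx a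
  | inr b => exact hy b

end Aux5

section Aux6
set_option linter.unusedSectionVars false
open Finset

theorem lowerSumN_mono_fn {ι : Type} [Fintype ι] [DecidableEq ι] {lo hi : ι → ℝ}
    {f₁ f₂ : (ι → ℝ) → ℝ} {C₁ C₂ : ℝ} (hb1 : ∀ x ∈ Rect lo hi, |f₁ x| ≤ C₁)
    (hb2 : ∀ x ∈ Rect lo hi, |f₂ x| ≤ C₂) (hle : ∀ x ∈ Rect lo hi, f₁ x ≤ f₂ x)
    (P : PartitionN lo hi) : lowerSumN f₁ P ≤ lowerSumN f₂ P := by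
  refine Finset.sum_le_sum fun J _ => mul_le_mul_of_nonneg_right ?_ (subVol_nonneg P J)
  refine le_csInf ((rect_nonempty P J).image _) ?_
  rintro _ ⟨x, hx, rfl⟩
  exact (csInf_le (bddBelow_image hb1 (rect_subset P J)) ⟨x, hx, rfl⟩).trans
    (hle x (rect_subset P J hx))

theorem upperSumN_mono_fn {ι : Type} [Fintype ι] [DecidableEq ι] {lo hi : ι → ℝ}
    {f₁ f₂ : (ι → ℝ) → ℝ} {C₁ C₂ : ℝ} (hb1 : ∀ x ∈ Rect lo hi, |f₁ x| ≤ C₁)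
    (hb2 : ∀ x ∈ Rect lo hi, |f₂ x| ≤ C₂) (hle : ∀ x ∈ Rect lo hi, f₁ x ≤ f₂ x)
    (P : PartitionN lo hi) : upperSumN f₁ P ≤ upperSumN f₂ P := by
  refine Finset.sum_le_sum fun J _ => mul_le_mul_of_nonneg_right ?_ (subVol_nonneg P J)
  refine csSup_le ((rect_nonempty P J).image _) ?_
  rintro _ ⟨x, hx, rfl⟩
  exact (hle x (rect_subset P J hx)).trans
    (le_csSup (bddAbove_image hb2 (rect_subset P J)) ⟨x, hx, rfl⟩)

variable {κ₁ κ₂ : Type} [Fintype κ₁] [Fintype κ₂] [DecidableEq κ₁] [DecidableEq κ₂]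
  {lo hi : κ₁ ⊕ κ₂ → ℝ} {f : (κ₁ ⊕ κ₂ → ℝ) → ℝ} {C : ℝ}

theorem hbx_of_hb (hb : ∀ x ∈ Rect lo hi, |f x| ≤ C) {x : κ₁ → ℝ}
    (hx : x ∈ Rect (lo ∘ Sum.inl) (hi ∘ Sum.inl)) :
    ∀ y ∈ Rect (lo ∘ Sum.inr) (hi ∘ Sum.inr), |f (Sum.elim x y)| ≤ C :=
  fun y hy => hb _ (elim_mem_rect hx hy)

theorem gLower_bound (hb : ∀ x ∈ Rect lo hi, |f x| ≤ C)
    (hlo2 : ∀ b, (lo ∘ Sum.inr) b ≤ (hi ∘ Sum.inr) b) {x : κ₁ → ℝ}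
    (hx : x ∈ Rect (lo ∘ Sum.inl) (hi ∘ Sum.inl)) :
    |lowerIntN (lo ∘ Sum.inr) (hi ∘ Sum.inr) (fun y => f (Sum.elim x y))| ≤
      C * vol (lo ∘ Sum.inr) (hi ∘ Sum.inr) := by
  have hfx := hbx_of_hb hb hx
  obtain ⟨Q0⟩ := nonempty_partitionN hlo2
  rw [abs_le]
  constructor
  · exact (bound_le_lowerSumN hfx Q0).trans (le_csSup (bddAbove_lowerSums hfx) ⟨Q0, rfl⟩)
  · refine csSup_le ⟨_, ⟨Q0, rfl⟩⟩ ?_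
    rintro _ ⟨Q, rfl⟩
    exact lowerSumN_le_bound hfx Q

theorem hUpper_bound (hb : ∀ x ∈ Rect lo hi, |f x| ≤ C)
    (hlo2 : ∀ b, (lo ∘ Sum.inr) b ≤ (hi ∘ Sum.inr) b) {x : κ₁ → ℝ}
    (hx : x ∈ Rect (lo ∘ Sum.inl) (hi ∘ Sum.inl)) :
    |upperIntN (lo ∘ Sum.inr) (hi ∘ Sum.inr) (fun y => f (Sum.elim x y))| ≤
      C * vol (lo ∘ Sum.inr) (hi ∘ Sum.inr) := by
  have hfx := hbx_of_hb hb hx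
  obtain ⟨Q0⟩ := nonempty_partitionN hlo2
  rw [abs_le]
  constructor
  · refine le_csInf ⟨_, ⟨Q0, rfl⟩⟩ ?_
    rintro _ ⟨Q, rfl⟩
    exact bound_le_upperSumN hfx Q
  · exact (csInf_le (bddBelow_upperSums hfx) ⟨Q0, rfl⟩).trans (upperSumN_le_bound hfx Q0)

theorem key1 (hb : ∀ x ∈ Rect lo hi, |f x| ≤ C) (P : PartitionN lo hi) :
    lowerSumN f P ≤ lowerSumN
      (fun x => lowerIntN (lo ∘ Sum.inr) (hi ∘ Sum.inr) (fun y => f (Sum.elim x y)))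
      (restL P) := by
  set gg : (κ₁ → ℝ) → ℝ :=
    fun x => lowerIntN (lo ∘ Sum.inr) (hi ∘ Sum.inr) (fun y => f (Sum.elim x y)) with hgg
  have hinner : ∀ J₁ : ∀ a, Fin ((P (Sum.inl a)).n),
      (∑ J₂ : ∀ b, Fin ((P (Sum.inr b)).n),
        sInf (f '' Rect (subLo P (comb P J₁ J₂)) (subHi P (comb P J₁ J₂))) *
          subVol (restR P) J₂) ≤
      sInf (gg '' Rect (subLo (restL P) J₁) (subHi (restL P) J₁)) := by
    intro J₁
    refine le_csInf ((rect_nonempty (restL P) J₁).image _) ?_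
    rintro _ ⟨x, hx, rfl⟩
    have hxR := rect_subset (restL P) J₁ hx
    have hfx := hbx_of_hb hb hxR
    have hsub : ∀ J₂ : ∀ b, Fin ((P (Sum.inr b)).n),
        ((fun y => f (Sum.elim x y)) '' Rect (subLo (restR P) J₂) (subHi (restR P) J₂)) ⊆
          f '' Rect (subLo P (comb P J₁ J₂)) (subHi P (comb P J₁ J₂)) := by
      rintro J₂ _ ⟨y, hy, rfl⟩
      exact ⟨Sum.elim x y, elim_mem_box P hx hy, rfl⟩
    calc (∑ J₂ : ∀ b, Fin ((P (Sum.inr b)).n),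
          sInf (f '' Rect (subLo P (comb P J₁ J₂)) (subHi P (comb P J₁ J₂))) *
            subVol (restR P) J₂)
        ≤ lowerSumN (fun y => f (Sum.elim x y)) (restR P) :=
          Finset.sum_le_sum fun J₂ _ => mul_le_mul_of_nonneg_right
            (csInf_le_csInf (bddBelow_image hb (rect_subset P _))
              ((rect_nonempty (restR P) J₂).image _) (hsub J₂)) (subVol_nonneg _ _)
      _ ≤ gg x := le_csSup (bddAbove_lowerSums hfx) ⟨restR P, rfl⟩
  calc lowerSumN f P
      = ∑ J₁ : ∀ a, Fin ((P (Sum.inl a)).n), ∑ J₂ : ∀ b, Fin ((P (Sum.inr b)).n),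
          sInf (f '' Rect (subLo P (comb P J₁ J₂)) (subHi P (comb P J₁ J₂))) *
            subVol P (comb P J₁ J₂) :=
        sum_comb P (fun J => sInf (f '' Rect (subLo P J) (subHi P J)) * subVol P J)
    _ ≤ ∑ J₁ : ∀ a, Fin ((P (Sum.inl a)).n),
          sInf (gg '' Rect (subLo (restL P) J₁) (subHi (restL P) J₁)) *
            subVol (restL P) J₁ := by
        refine Finset.sum_le_sum fun J₁ _ => ?_
        calc (∑ J₂ : ∀ b, Fin ((P (Sum.inr b)).n),
              sInf (f '' Rect (subLo P (comb P J₁ J₂)) (subHi P (comb P J₁ J₂))) *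
                subVol P (comb P J₁ J₂))
            = (∑ J₂ : ∀ b, Fin ((P (Sum.inr b)).n),
                sInf (f '' Rect (subLo P (comb P J₁ J₂)) (subHi P (comb P J₁ J₂))) *
                  subVol (restR P) J₂) * subVol (restL P) J₁ := by
              rw [Finset.sum_mul]
              refine Finset.sum_congr rfl fun J₂ _ => ?_
              rw [subVol_comb]; ring
          _ ≤ sInf (gg '' Rect (subLo (restL P) J₁) (subHi (restL P) J₁)) *
                subVol (restL P) J₁ :=
              mul_le_mul_of_nonneg_right (hinner J₁) (subVol_nonneg _ _)
    _ = lowerSumN gg (restL P) := rfl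

theorem key2 (hb : ∀ x ∈ Rect lo hi, |f x| ≤ C) (P : PartitionN lo hi) :
    upperSumN
      (fun x => upperIntN (lo ∘ Sum.inr) (hi ∘ Sum.inr) (fun y => f (Sum.elim x y)))
      (restL P) ≤ upperSumN f P := by
  set hh : (κ₁ → ℝ) → ℝ :=
    fun x => upperIntN (lo ∘ Sum.inr) (hi ∘ Sum.inr) (fun y => f (Sum.elim x y)) with hhh
  have hinner : ∀ J₁ : ∀ a, Fin ((P (Sum.inl a)).n),
      sSup (hh '' Rect (subLo (restL P) J₁) (subHi (restL P) J₁)) ≤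
      (∑ J₂ : ∀ b, Fin ((P (Sum.inr b)).n),
        sSup (f '' Rect (subLo P (comb P J₁ J₂)) (subHi P (comb P J₁ J₂))) *
          subVol (restR P) J₂) := by
    intro J₁
    refine csSup_le ((rect_nonempty (restL P) J₁).image _) ?_
    rintro _ ⟨x, hx, rfl⟩
    have hxR := rect_subset (restL P) J₁ hx
    have hfx := hbx_of_hb hb hxR
    have hsub : ∀ J₂ : ∀ b, Fin ((P (Sum.inr b)).n),
        ((fun y => f (Sum.elim x y)) '' Rect (subLo (restR P) J₂) (subHi (restR P) J₂)) ⊆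
          f '' Rect (subLo P (comb P J₁ J₂)) (subHi P (comb P J₁ J₂)) := by
      rintro J₂ _ ⟨y, hy, rfl⟩
      exact ⟨Sum.elim x y, elim_mem_box P hx hy, rfl⟩
    calc hh x ≤ upperSumN (fun y => f (Sum.elim x y)) (restR P) :=
          csInf_le (bddBelow_upperSums hfx) ⟨restR P, rfl⟩
      _ ≤ _ := Finset.sum_le_sum fun J₂ _ => mul_le_mul_of_nonneg_right
            (csSup_le_csSup (bddAbove_image hb (rect_subset P _))
              ((rect_nonempty (restR P) J₂).image _) (hsub J₂)) (subVol_nonneg _ _)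
  calc upperSumN hh (restL P)
      = ∑ J₁ : ∀ a, Fin ((P (Sum.inl a)).n),
          sSup (hh '' Rect (subLo (restL P) J₁) (subHi (restL P) J₁)) *
            subVol (restL P) J₁ := rfl
    _ ≤ ∑ J₁ : ∀ a, Fin ((P (Sum.inl a)).n), ∑ J₂ : ∀ b, Fin ((P (Sum.inr b)).n),
          sSup (f '' Rect (subLo P (comb P J₁ J₂)) (subHi P (comb P J₁ J₂))) *
            subVol P (comb P J₁ J₂) := by
        refine Finset.sum_le_sum fun J₁ _ => ?_
        calc sSup (hh '' Rect (subLo (restL P) J₁) (subHi (restL P) J₁)) *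
              subVol (restL P) J₁
            ≤ (∑ J₂ : ∀ b, Fin ((P (Sum.inr b)).n),
                sSup (f '' Rect (subLo P (comb P J₁ J₂)) (subHi P (comb P J₁ J₂))) *
                  subVol (restR P) J₂) * subVol (restL P) J₁ :=
              mul_le_mul_of_nonneg_right (hinner J₁) (subVol_nonneg _ _)
          _ = _ := by
              rw [Finset.sum_mul]
              refine Finset.sum_congr rfl fun J₂ _ => ?_
              rw [subVol_comb]; ring
    _ = upperSumN f P :=
        (sum_comb P (fun J => sSup (f '' Rect (subLo P J) (subHi P J)) * subVol P J)).symm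

end Aux6


/-- Fubini, version I: if `f` is Riemann integrable on `R × S`, then the
functions `g(x) = (lower integral of f_x over S)` and
`h(x) = (upper integral of f_x over S)` are Riemann integrable on `R` and
`∫_R g = ∫_R h = ∫_{R×S} f`. -/
theorem fubini_I (n m : ℕ) (lo hi : Fin n ⊕ Fin m → ℝ)
    (hlo : ∀ i, lo i ≤ hi i) (f : (Fin n ⊕ Fin m → ℝ) → ℝ)
    (hb : ∃ C, ∀ x ∈ Rect lo hi, |f x| ≤ C)
    (hf : RiemannIntN lo hi f)
    (g h : (Fin n → ℝ) → ℝ)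
    (hg : g = fun x => lowerIntN (lo ∘ Sum.inr) (hi ∘ Sum.inr)
      (fun y => f (Sum.elim x y)))
    (hh : h = fun x => upperIntN (lo ∘ Sum.inr) (hi ∘ Sum.inr)
      (fun y => f (Sum.elim x y))) :
    RiemannIntN (lo ∘ Sum.inl) (hi ∘ Sum.inl) g ∧
    RiemannIntN (lo ∘ Sum.inl) (hi ∘ Sum.inl) h ∧
    intN (lo ∘ Sum.inl) (hi ∘ Sum.inl) g = intN lo hi f ∧
    intN (lo ∘ Sum.inl) (hi ∘ Sum.inl) h = intN lo hi f := by
  classical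
  obtain ⟨C₀, hC₀⟩ := hb
  have hC : ∀ x ∈ Rect lo hi, |f x| ≤ max C₀ 0 := fun x hx => (hC₀ x hx).trans (le_max_left _ _)
  subst hg hh
  set G : (Fin n → ℝ) → ℝ :=
    fun x => lowerIntN (lo ∘ Sum.inr) (hi ∘ Sum.inr) (fun y => f (Sum.elim x y)) with hG
  set H : (Fin n → ℝ) → ℝ :=
    fun x => upperIntN (lo ∘ Sum.inr) (hi ∘ Sum.inr) (fun y => f (Sum.elim x y)) with hH
  have hlo1 : ∀ a, (lo ∘ Sum.inl) a ≤ (hi ∘ Sum.inl) a := fun a => hlo _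
  have hlo2 : ∀ b, (lo ∘ Sum.inr) b ≤ (hi ∘ Sum.inr) b := fun b => hlo _
  obtain ⟨P0⟩ := nonempty_partitionN hlo
  have hbg : ∀ x ∈ Rect (lo ∘ Sum.inl) (hi ∘ Sum.inl),
      |G x| ≤ max C₀ 0 * vol (lo ∘ Sum.inr) (hi ∘ Sum.inr) :=
    fun x hx => gLower_bound hC hlo2 hx
  have hbh : ∀ x ∈ Rect (lo ∘ Sum.inl) (hi ∘ Sum.inl),
      |H x| ≤ max C₀ 0 * vol (lo ∘ Sum.inr) (hi ∘ Sum.inr) :=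
    fun x hx => hUpper_bound hC hlo2 hx
  have hgh : ∀ x ∈ Rect (lo ∘ Sum.inl) (hi ∘ Sum.inl), G x ≤ H x :=
    fun x hx => lowerIntN_le_upperIntN hlo2 (hbx_of_hb hC hx)
  have hfe : lowerIntN lo hi f = upperIntN lo hi f := hf
  -- main inequalities
  have h1 : lowerIntN lo hi f ≤ lowerIntN (lo ∘ Sum.inl) (hi ∘ Sum.inl) G := by
    refine csSup_le ⟨_, ⟨P0, rfl⟩⟩ ?_
    rintro _ ⟨P, rfl⟩
    exact (key1 hC P).trans (le_csSup (bddAbove_lowerSums hbg) ⟨restL P, rfl⟩)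
  have h2 : upperIntN (lo ∘ Sum.inl) (hi ∘ Sum.inl) G ≤ upperIntN lo hi f := by
    refine le_csInf ⟨_, ⟨P0, rfl⟩⟩ ?_
    rintro _ ⟨P, rfl⟩
    exact (csInf_le (bddBelow_upperSums hbg) ⟨restL P, rfl⟩).trans
      ((upperSumN_mono_fn hbg hbh hgh (restL P)).trans (key2 hC P))
  have h3 : lowerIntN (lo ∘ Sum.inl) (hi ∘ Sum.inl) G ≤
      upperIntN (lo ∘ Sum.inl) (hi ∘ Sum.inl) G := lowerIntN_le_upperIntN hlo1 hbg
  have h1h : lowerIntN lo hi f ≤ lowerIntN (lo ∘ Sum.inl) (hi ∘ Sum.inl) H := by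
    refine csSup_le ⟨_, ⟨P0, rfl⟩⟩ ?_
    rintro _ ⟨P, rfl⟩
    exact ((key1 hC P).trans (lowerSumN_mono_fn hbg hbh hgh (restL P))).trans
      (le_csSup (bddAbove_lowerSums hbh) ⟨restL P, rfl⟩)
  have h2h : upperIntN (lo ∘ Sum.inl) (hi ∘ Sum.inl) H ≤ upperIntN lo hi f := by
    refine le_csInf ⟨_, ⟨P0, rfl⟩⟩ ?_
    rintro _ ⟨P, rfl⟩
    exact (csInf_le (bddBelow_upperSums hbh) ⟨restL P, rfl⟩).trans (key2 hC P)
  have h3h : lowerIntN (lo ∘ Sum.inl) (hi ∘ Sum.inl) H ≤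
      upperIntN (lo ∘ Sum.inl) (hi ∘ Sum.inl) H := lowerIntN_le_upperIntN hlo1 hbh
  have egu : upperIntN (lo ∘ Sum.inl) (hi ∘ Sum.inl) G = upperIntN lo hi f := by
    refine le_antisymm h2 ?_
    calc upperIntN lo hi f = lowerIntN lo hi f := hfe.symm
      _ ≤ lowerIntN (lo ∘ Sum.inl) (hi ∘ Sum.inl) G := h1
      _ ≤ upperIntN (lo ∘ Sum.inl) (hi ∘ Sum.inl) G := h3
  have egl : lowerIntN (lo ∘ Sum.inl) (hi ∘ Sum.inl) G =
      upperIntN (lo ∘ Sum.inl) (hi ∘ Sum.inl) G := by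
    refine le_antisymm h3 ?_
    calc upperIntN (lo ∘ Sum.inl) (hi ∘ Sum.inl) G ≤ upperIntN lo hi f := h2
      _ = lowerIntN lo hi f := hfe.symm
      _ ≤ lowerIntN (lo ∘ Sum.inl) (hi ∘ Sum.inl) G := h1
  have ehu : upperIntN (lo ∘ Sum.inl) (hi ∘ Sum.inl) H = upperIntN lo hi f := by
    refine le_antisymm h2h ?_
    calc upperIntN lo hi f = lowerIntN lo hi f := hfe.symm
      _ ≤ lowerIntN (lo ∘ Sum.inl) (hi ∘ Sum.inl) H := h1h
      _ ≤ upperIntN (lo ∘ Sum.inl) (hi ∘ Sum.inl) H := h3h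
  have ehl : lowerIntN (lo ∘ Sum.inl) (hi ∘ Sum.inl) H =
      upperIntN (lo ∘ Sum.inl) (hi ∘ Sum.inl) H := by
    refine le_antisymm h3h ?_
    calc upperIntN (lo ∘ Sum.inl) (hi ∘ Sum.inl) H ≤ upperIntN lo hi f := h2h
      _ = lowerIntN lo hi f := hfe.symm
      _ ≤ lowerIntN (lo ∘ Sum.inl) (hi ∘ Sum.inl) H := h1h
  exact ⟨egl, ehl, egu, ehu⟩
end

section
/- (Bronstein integral) For positive reals a, b, ∫₀^π log(a² + b² − 2ab·cos x) dx = 2π·log(max{a,b}). -/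
open Real MeasureTheory Set Filter

namespace BronsteinAux

/-- positivity of the quadratic for `0 ≤ r < 1` -/
lemma quad_pos {r : ℝ} (h0 : 0 ≤ r) (h1 : r < 1) (x : ℝ) :
    0 < 1 + r ^ 2 - 2 * r * Real.cos x := by
  nlinarith [Real.cos_le_one x, sq_nonneg (1 - r)]

lemma quad_pos' {r : ℝ} (h0 : 0 ≤ r) (h1 : r < 1) (x : ℝ) :
    0 < 1 + r ^ 2 + 2 * r * Real.cos x := by
  nlinarith [Real.neg_one_le_cos x, sq_nonneg (1 - r)]

lemma cont {r : ℝ} (h0 : 0 ≤ r) (h1 : r < 1) :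
    Continuous fun x : ℝ => Real.log (1 + r ^ 2 - 2 * r * Real.cos x) := by
  apply Continuous.log (by continuity)
  exact fun x => (quad_pos h0 h1 x).ne'

lemma cont' {r : ℝ} (h0 : 0 ≤ r) (h1 : r < 1) :
    Continuous fun x : ℝ => Real.log (1 + r ^ 2 + 2 * r * Real.cos x) := by
  apply Continuous.log (by continuity)
  exact fun x => (quad_pos' h0 h1 x).ne'

noncomputable def J (r : ℝ) : ℝ := ∫ x in (0:ℝ)..π, Real.log (1 + r ^ 2 - 2 * r * Real.cos x)

lemma J_funEq {r : ℝ} (h0 : 0 ≤ r) (h1 : r < 1) : J r = (1/2) * J (r ^ 2) := by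
  have h20 : (0:ℝ) ≤ r ^ 2 := sq_nonneg r
  have h21 : r ^ 2 < 1 := by nlinarith
  have hsub : ∫ x in (0:ℝ)..(π/2), Real.log (1 + r ^ 2 + 2 * r * Real.cos x)
      = ∫ x in (π/2:ℝ)..π, Real.log (1 + r ^ 2 - 2 * r * Real.cos x) := by
    have h := intervalIntegral.integral_comp_sub_left (a := 0) (b := π/2)
      (fun x => Real.log (1 + r ^ 2 - 2 * r * Real.cos x)) π
    rw [sub_zero, show π - π/2 = π/2 by ring] at h
    rw [← h]
    apply intervalIntegral.integral_congr
    intro x _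
    simp only [Real.cos_pi_sub]
    ring_nf
  have hsplit : J r = (∫ x in (0:ℝ)..(π/2), Real.log (1 + r ^ 2 - 2 * r * Real.cos x))
      + ∫ x in (π/2:ℝ)..π, Real.log (1 + r ^ 2 - 2 * r * Real.cos x) :=
    (intervalIntegral.integral_add_adjacent_intervals
      ((cont h0 h1).intervalIntegrable _ _) ((cont h0 h1).intervalIntegrable _ _)).symm
  have hadd : (∫ x in (0:ℝ)..(π/2), Real.log (1 + r ^ 2 - 2 * r * Real.cos x))
      + (∫ x in (0:ℝ)..(π/2), Real.log (1 + r ^ 2 + 2 * r * Real.cos x))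
      = ∫ x in (0:ℝ)..(π/2),
          (Real.log (1 + r ^ 2 - 2 * r * Real.cos x)
            + Real.log (1 + r ^ 2 + 2 * r * Real.cos x)) :=
    (intervalIntegral.integral_add ((cont h0 h1).intervalIntegrable _ _)
      ((cont' h0 h1).intervalIntegrable _ _)).symm
  have hprod : ∫ x in (0:ℝ)..(π/2),
        (Real.log (1 + r ^ 2 - 2 * r * Real.cos x)
          + Real.log (1 + r ^ 2 + 2 * r * Real.cos x))
      = ∫ x in (0:ℝ)..(π/2), Real.log (1 + (r ^ 2) ^ 2 - 2 * r ^ 2 * Real.cos (2 * x)) := by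
    apply intervalIntegral.integral_congr
    intro x _
    dsimp only
    rw [← Real.log_mul (quad_pos h0 h1 x).ne' (quad_pos' h0 h1 x).ne']
    congr 1
    rw [Real.cos_two_mul]
    ring
  have hhalf : ∫ x in (0:ℝ)..(π/2), Real.log (1 + (r ^ 2) ^ 2 - 2 * r ^ 2 * Real.cos (2 * x))
      = (1/2) * J (r ^ 2) := by
    have h := intervalIntegral.integral_comp_mul_left (a := 0) (b := π/2)
      (fun x => Real.log (1 + (r ^ 2) ^ 2 - 2 * r ^ 2 * Real.cos x)) (c := 2) two_ne_zero
    rw [mul_zero, show (2:ℝ) * (π/2) = π by ring, smul_eq_mul] at h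
    rw [h, J]
    norm_num
  linarith [hsplit, hsub, hadd, hprod, hhalf]

lemma J_bound {r s : ℝ} (h0 : 0 ≤ s) (hsr : s ≤ r) (h1 : r < 1) :
    |J s| ≤ (2 * |Real.log (1 - r)| + 2 * Real.log 2) * π := by
  have hs1 : s < 1 := lt_of_le_of_lt hsr h1
  set C := 2 * |Real.log (1 - r)| + 2 * Real.log 2 with hC
  have habs : ∀ x ∈ Set.uIoc (0:ℝ) π,
      ‖Real.log (1 + s ^ 2 - 2 * s * Real.cos x)‖ ≤ C := by
    intro x _
    have hu : 0 < 1 + s ^ 2 - 2 * s * Real.cos x := quad_pos h0 hs1 x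
    have hub : 1 + s ^ 2 - 2 * s * Real.cos x ≤ (1 + s) ^ 2 := by
      nlinarith [Real.neg_one_le_cos x]
    have hlb : (1 - s) ^ 2 ≤ 1 + s ^ 2 - 2 * s * Real.cos x := by
      nlinarith [Real.cos_le_one x]
    have hupper : Real.log (1 + s ^ 2 - 2 * s * Real.cos x) ≤ 2 * Real.log 2 := by
      calc Real.log (1 + s ^ 2 - 2 * s * Real.cos x) ≤ Real.log ((1 + s) ^ 2) :=
            Real.log_le_log hu hub
        _ = 2 * Real.log (1 + s) := by
            rw [show ((1+s)^2 : ℝ) = (1+s)^(2:ℕ) by norm_num, Real.log_pow]; push_cast; ring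
        _ ≤ 2 * Real.log 2 := by
            have := Real.log_le_log (by linarith) (show (1:ℝ) + s ≤ 2 by linarith)
            linarith
    have hlower : -(2 * |Real.log (1 - r)|) ≤ Real.log (1 + s ^ 2 - 2 * s * Real.cos x) := by
      have h1s : (0:ℝ) < 1 - s := by linarith
      have h1r : (0:ℝ) < 1 - r := by linarith
      have hll : Real.log (1 - r) ≤ Real.log (1 - s) :=
        Real.log_le_log h1r (by linarith)
      have hln : Real.log (1 - r) ≤ 0 := Real.log_nonpos h1r.le (by linarith)
      have : Real.log ((1 - s) ^ 2) ≤ Real.log (1 + s ^ 2 - 2 * s * Real.cos x) :=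
        Real.log_le_log (by positivity) hlb
      rw [show ((1-s)^2 : ℝ) = (1-s)^(2:ℕ) by norm_num, Real.log_pow] at this
      push_cast at this
      rw [abs_of_nonpos hln]
      linarith
    rw [Real.norm_eq_abs, abs_le]
    constructor
    · have : (0:ℝ) ≤ Real.log 2 := Real.log_nonneg (by norm_num)
      rw [hC]; linarith
    · have : (0:ℝ) ≤ |Real.log (1 - r)| := abs_nonneg _
      rw [hC]; linarith
  have := intervalIntegral.norm_integral_le_of_norm_le_const habs
  rw [sub_zero, abs_of_pos Real.pi_pos] at this
  simpa [J, Real.norm_eq_abs] using this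

lemma J_iter {r : ℝ} (h0 : 0 ≤ r) (h1 : r < 1) (n : ℕ) :
    J r = (1/2) ^ n * J (r ^ (2 ^ n)) := by
  induction n with
  | zero => simp
  | succ n ih =>
    rw [ih, J_funEq (pow_nonneg h0 _) (pow_lt_one₀ h0 h1 (by positivity)),
      ← pow_mul, ← pow_succ]
    ring

lemma J_zero {r : ℝ} (h0 : 0 ≤ r) (h1 : r < 1) : J r = 0 := by
  have hb : ∀ n : ℕ, |J r| ≤ (1/2:ℝ) ^ n * ((2 * |Real.log (1 - r)| + 2 * Real.log 2) * π) := by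
    intro n
    rw [J_iter h0 h1 n, abs_mul, abs_pow]
    have h1' : |(1/2:ℝ)| = 1/2 := by norm_num
    rw [h1']
    gcongr
    exact J_bound (pow_nonneg h0 _)
      (by rcases eq_or_lt_of_le h0 with h | h
          · simp [← h]
          · exact pow_le_of_le_one h0 h1.le (by positivity)) h1
  have hlim : Tendsto (fun n : ℕ => (1/2:ℝ) ^ n *
      ((2 * |Real.log (1 - r)| + 2 * Real.log 2) * π)) atTop (nhds 0) := by
    simpa using (tendsto_pow_atTop_nhds_zero_of_lt_one (by norm_num : (0:ℝ) ≤ 1/2)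
      (by norm_num)).mul_const ((2 * |Real.log (1 - r)| + 2 * Real.log 2) * π)
  have : |J r| ≤ 0 := ge_of_tendsto hlim (Eventually.of_forall hb)
  exact abs_nonpos_iff.mp this

/-- `1 - cos x` sandwich -/
lemma one_sub_cos_eq (x : ℝ) : 1 - Real.cos x = 2 * Real.sin (x/2) ^ 2 := by
  have h1 := Real.cos_two_mul (x/2)
  have h2 := Real.sin_sq_add_cos_sq (x/2)
  rw [show 2 * (x/2) = x by ring] at h1
  nlinarith

lemma one_sub_cos_lb {x : ℝ} (hx0 : 0 < x) (hxπ : x ≤ π) :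
    2 * (x / π) ^ 2 ≤ 1 - Real.cos x := by
  rw [one_sub_cos_eq]
  have h := Real.mul_le_sin (x := x/2) (by linarith) (by linarith)
  have hπ : (0:ℝ) < π := Real.pi_pos
  have hxπ' : x / π = 2 / π * (x/2) := by field_simp
  rw [hxπ']
  have h0 : (0:ℝ) ≤ 2 / π * (x/2) := by positivity
  nlinarith

lemma one_sub_cos_ub {x : ℝ} (hx0 : 0 ≤ x) (hxπ : x ≤ π) : 1 - Real.cos x ≤ x ^ 2 / 2 := by
  rw [one_sub_cos_eq]
  have h := Real.sin_le (show (0:ℝ) ≤ x/2 by linarith)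
  have h' : 0 ≤ Real.sin (x/2) :=
    Real.sin_nonneg_of_nonneg_of_le_pi (by linarith) (by linarith [Real.pi_pos])
  nlinarith

lemma one_sub_cos_pos {x : ℝ} (hx0 : 0 < x) (hxπ : x ≤ π) : 0 < 1 - Real.cos x :=
  lt_of_lt_of_le (by positivity) (one_sub_cos_lb hx0 hxπ)

lemma intervalIntegrable_log_zero_pi : IntervalIntegrable Real.log volume 0 π := by
  have h1 : IntegrableOn Real.log (Ioc (0:ℝ) 1) volume := by
    have hneg : IntegrableOn (fun x => -Real.log x) (Ioc (0:ℝ) 1) volume := by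
      apply intervalIntegral.integrableOn_deriv_of_nonneg
        (g := fun x => x - x * Real.log x)
      · exact (continuous_id.sub Real.continuous_mul_log).continuousOn
      · intro x hx
        have hx0 : x ≠ 0 := ne_of_gt hx.1
        have hd : HasDerivAt (fun y : ℝ => y - y * Real.log y)
            (1 - (1 * Real.log x + x * x⁻¹)) x :=
          (hasDerivAt_id x).sub ((hasDerivAt_id x).mul (Real.hasDerivAt_log hx0))
        convert hd using 1
        field_simp
        ring
      · intro x hx
        simp only [neg_nonneg]
        exact Real.log_nonpos hx.1.le hx.2.le
    have h2 : IntegrableOn (-(fun x : ℝ => -Real.log x)) (Ioc (0:ℝ) 1) volume := hneg.neg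
    exact h2.congr_fun (fun x _ => by simp) measurableSet_Ioc
  have hA : IntervalIntegrable Real.log volume 0 1 :=
    (intervalIntegrable_iff_integrableOn_Ioc_of_le (by norm_num)).mpr h1
  have hB : IntervalIntegrable Real.log volume 1 π := by
    apply intervalIntegral.intervalIntegrable_log
    rw [Set.uIcc_of_le (by linarith [Real.pi_gt_three])]
    rintro ⟨h, -⟩
    linarith
  exact hA.trans hB

lemma integrable_log_one_sub_cos :
    IntervalIntegrable (fun x => Real.log (1 - Real.cos x)) volume 0 π := by
  rw [intervalIntegrable_iff_integrableOn_Ioc_of_le Real.pi_pos.le]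
  have hg : IntegrableOn (fun x => 2 * |Real.log x| + Real.log (π ^ 2 / 2)) (Ioc (0:ℝ) π)
      volume := by
    have := (intervalIntegrable_log_zero_pi.abs.const_mul 2).add
      (intervalIntegrable_const (c := Real.log (π ^ 2 / 2)))
    exact (intervalIntegrable_iff_integrableOn_Ioc_of_le Real.pi_pos.le).mp this
  apply hg.integrable.mono
  · exact ((Real.measurable_log.comp
      (measurable_const.sub Real.measurable_cos)).aestronglyMeasurable)
  · rw [ae_restrict_iff' measurableSet_Ioc]
    filter_upwards with x hx
    obtain ⟨hx0, hxπ⟩ := hx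
    have hπ : (0:ℝ) < π := Real.pi_pos
    have hu : 0 < 1 - Real.cos x := one_sub_cos_pos hx0 hxπ
    have hlogsq : Real.log (x ^ 2) = 2 * Real.log x := by
      rw [show (x^2 : ℝ) = x^(2:ℕ) by norm_num, Real.log_pow]; push_cast; ring
    have hπsq : Real.log (π ^ 2) = 2 * Real.log π := by
      rw [show (π^2 : ℝ) = π^(2:ℕ) by norm_num, Real.log_pow]; push_cast; ring
    have hupper : Real.log (1 - Real.cos x) ≤ 2 * Real.log x - Real.log 2 := by
      calc Real.log (1 - Real.cos x) ≤ Real.log (x ^ 2 / 2) :=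
            Real.log_le_log hu (one_sub_cos_ub hx0.le hxπ)
        _ = 2 * Real.log x - Real.log 2 := by
            rw [Real.log_div (by positivity) (by norm_num), hlogsq]
    have hlower : 2 * Real.log x - (2 * Real.log π - Real.log 2)
        ≤ Real.log (1 - Real.cos x) := by
      have h1 : Real.log (2 * (x / π) ^ 2) ≤ Real.log (1 - Real.cos x) :=
        Real.log_le_log (by positivity) (one_sub_cos_lb hx0 hxπ)
      have h2 : Real.log (2 * (x / π) ^ 2)
          = Real.log 2 + 2 * (Real.log x - Real.log π) := by
        rw [Real.log_mul (by norm_num) (by positivity),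
          show ((x/π)^2 : ℝ) = (x/π)^(2:ℕ) by norm_num, Real.log_pow,
          Real.log_div (ne_of_gt hx0) (ne_of_gt hπ)]
        push_cast; ring
      rw [h2] at h1
      linarith
    have hπ2 : Real.log (π ^ 2 / 2) = 2 * Real.log π - Real.log 2 := by
      rw [Real.log_div (by positivity) (by norm_num), hπsq]
    have hlog2 : (0:ℝ) ≤ Real.log 2 := Real.log_nonneg (by norm_num)
    have hlogπ : Real.log 2 ≤ Real.log π := Real.log_le_log (by norm_num)
      (by linarith [Real.pi_gt_three])
    have hrhs_nonneg : (0:ℝ) ≤ 2 * |Real.log x| + Real.log (π ^ 2 / 2) := by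
      rw [hπ2]; have := abs_nonneg (Real.log x); linarith
    rw [Real.norm_eq_abs, Real.norm_eq_abs, abs_of_nonneg hrhs_nonneg, abs_le]
    have habs := abs_nonneg (Real.log x)
    have h1 : Real.log x ≤ |Real.log x| := le_abs_self _
    have h2 : -|Real.log x| ≤ Real.log x := neg_abs_le _
    constructor
    · rw [hπ2]; linarith
    · rw [hπ2]; linarith

lemma integrable_log_one_sub_cos' (c d : ℝ) (hc : 0 ≤ c) (hd : d ≤ π) (hcd : c ≤ d) :
    IntervalIntegrable (fun x => Real.log (1 - Real.cos x)) volume c d := by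
  apply integrable_log_one_sub_cos.mono_set
  rw [Set.uIcc_of_le hcd, Set.uIcc_of_le Real.pi_pos.le]
  exact Set.Icc_subset_Icc hc hd

lemma K_val : ∫ x in (0:ℝ)..π, Real.log (1 - Real.cos x) = -π * Real.log 2 := by
  have hπ : (0:ℝ) < π := Real.pi_pos
  set K := ∫ x in (0:ℝ)..π, Real.log (1 - Real.cos x) with hK
  have hIA : IntervalIntegrable (fun x => Real.log (1 - Real.cos x)) volume 0 (π/2) :=
    integrable_log_one_sub_cos' 0 (π/2) le_rfl (by linarith) (by linarith)
  have hIB : IntervalIntegrable (fun x => Real.log (1 - Real.cos x)) volume (π/2) π :=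
    integrable_log_one_sub_cos' (π/2) π (by linarith) le_rfl (by linarith)
  have hIplus : IntervalIntegrable (fun x => Real.log (1 + Real.cos x)) volume 0 (π/2) := by
    apply ContinuousOn.intervalIntegrable
    apply ContinuousOn.log ((continuousOn_const.add Real.continuous_cos.continuousOn))
    intro x hx
    rw [Set.uIcc_of_le (by linarith)] at hx
    have : 0 ≤ Real.cos x := Real.cos_nonneg_of_mem_Icc ⟨by linarith [hx.1], hx.2⟩
    show (1:ℝ) + Real.cos x ≠ 0
    linarith
  have hsplit : K = (∫ x in (0:ℝ)..(π/2), Real.log (1 - Real.cos x))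
      + ∫ x in (π/2:ℝ)..π, Real.log (1 - Real.cos x) :=
    (intervalIntegral.integral_add_adjacent_intervals hIA hIB).symm
  have hsub : ∫ x in (0:ℝ)..(π/2), Real.log (1 + Real.cos x)
      = ∫ x in (π/2:ℝ)..π, Real.log (1 - Real.cos x) := by
    have h := intervalIntegral.integral_comp_sub_left (a := 0) (b := π/2)
      (fun x => Real.log (1 - Real.cos x)) π
    rw [sub_zero, show π - π/2 = π/2 by ring] at h
    rw [← h]
    apply intervalIntegral.integral_congr
    intro x _
    simp only [Real.cos_pi_sub]
    ring_nf
  have hadd : (∫ x in (0:ℝ)..(π/2), Real.log (1 - Real.cos x))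
      + (∫ x in (0:ℝ)..(π/2), Real.log (1 + Real.cos x))
      = ∫ x in (0:ℝ)..(π/2), (Real.log (1 - Real.cos x) + Real.log (1 + Real.cos x)) :=
    (intervalIntegral.integral_add hIA hIplus).symm
  have hprod : ∫ x in (0:ℝ)..(π/2), (Real.log (1 - Real.cos x) + Real.log (1 + Real.cos x))
      = ∫ x in (0:ℝ)..(π/2), (Real.log (1 - Real.cos (2*x)) - Real.log 2) := by
    apply intervalIntegral.integral_congr_ae
    filter_upwards with x hx
    rw [Set.uIoc_of_le (by linarith)] at hx
    obtain ⟨hx0, hxh⟩ := hx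
    have h1 : 0 < 1 - Real.cos x := one_sub_cos_pos hx0 (by linarith)
    have h2 : 0 ≤ Real.cos x := Real.cos_nonneg_of_mem_Icc ⟨by linarith, by linarith⟩
    have h3 : 0 < 1 + Real.cos x := by linarith
    have h4 : 0 < 1 - Real.cos (2*x) := one_sub_cos_pos (by linarith) (by linarith)
    rw [← Real.log_mul h1.ne' h3.ne', ← Real.log_div h4.ne' (by norm_num)]
    congr 1
    have := Real.cos_two_mul x
    have := Real.sin_sq_add_cos_sq x
    nlinarith
  have hIdouble : IntervalIntegrable (fun x => Real.log (1 - Real.cos (2*x))) volume 0 (π/2) := by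
    have h := integrable_log_one_sub_cos.comp_mul_left (c := 2)
    norm_num at h
    exact h
  have hsub2 : ∫ x in (0:ℝ)..(π/2), (Real.log (1 - Real.cos (2*x)) - Real.log 2)
      = (∫ x in (0:ℝ)..(π/2), Real.log (1 - Real.cos (2*x))) - (π/2) * Real.log 2 := by
    rw [intervalIntegral.integral_sub hIdouble intervalIntegrable_const,
      intervalIntegral.integral_const, smul_eq_mul, sub_zero]
  have hhalf : ∫ x in (0:ℝ)..(π/2), Real.log (1 - Real.cos (2*x)) = (1/2) * K := by
    have h := intervalIntegral.integral_comp_mul_left (a := 0) (b := π/2)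
      (fun x => Real.log (1 - Real.cos x)) (c := 2) two_ne_zero
    rw [mul_zero, show (2:ℝ) * (π/2) = π by ring, smul_eq_mul] at h
    rw [h, ← hK]
    norm_num
  linarith [hsplit, hsub, hadd, hprod, hsub2, hhalf]

lemma J_one : J 1 = 0 := by
  have hπ : (0:ℝ) < π := Real.pi_pos
  have hcongr : J 1 = ∫ x in (0:ℝ)..π, (Real.log 2 + Real.log (1 - Real.cos x)) := by
    rw [J]
    apply intervalIntegral.integral_congr_ae
    filter_upwards with x hx
    rw [Set.uIoc_of_le hπ.le] at hx
    have h1 : 0 < 1 - Real.cos x := one_sub_cos_pos hx.1 hx.2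
    rw [show (1 + 1 ^ 2 - 2 * 1 * Real.cos x : ℝ) = 2 * (1 - Real.cos x) by ring,
      Real.log_mul (by norm_num) h1.ne']
  rw [hcongr, intervalIntegral.integral_add intervalIntegrable_const
    integrable_log_one_sub_cos, intervalIntegral.integral_const, K_val, smul_eq_mul]
  ring

lemma key (a b : ℝ) (ha : 0 < a) (hb : 0 < b) (hab : a ≤ b) :
    ∫ x in (0:ℝ)..π, Real.log (a ^ 2 + b ^ 2 - 2 * a * b * Real.cos x)
      = 2 * π * Real.log b := by
  have hπ : (0:ℝ) < π := Real.pi_pos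
  set r := a / b with hr
  have hr0 : 0 < r := div_pos ha hb
  have hr1 : r ≤ 1 := (div_le_one hb).mpr hab
  have hfact : ∀ x : ℝ, a ^ 2 + b ^ 2 - 2 * a * b * Real.cos x
      = b ^ 2 * (1 + r ^ 2 - 2 * r * Real.cos x) := by
    intro x; rw [hr]; field_simp; ring
  have hupos : ∀ x : ℝ, 0 < x → x ≤ π → 0 < 1 + r ^ 2 - 2 * r * Real.cos x := by
    intro x hx0 hxπ
    have hc := one_sub_cos_pos hx0 hxπ
    nlinarith [sq_nonneg (1 - r)]
  have hcongr : (∫ x in (0:ℝ)..π, Real.log (a ^ 2 + b ^ 2 - 2 * a * b * Real.cos x))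
      = ∫ x in (0:ℝ)..π, (Real.log (b ^ 2) + Real.log (1 + r ^ 2 - 2 * r * Real.cos x)) := by
    apply intervalIntegral.integral_congr_ae
    filter_upwards with x hx
    rw [Set.uIoc_of_le hπ.le] at hx
    rw [hfact x, Real.log_mul (by positivity) (hupos x hx.1 hx.2).ne']
  have hint : IntervalIntegrable (fun x => Real.log (1 + r ^ 2 - 2 * r * Real.cos x))
      volume 0 π := by
    rcases eq_or_lt_of_le hr1 with heq | hlt
    · rw [intervalIntegrable_iff_integrableOn_Ioc_of_le hπ.le]
      have hg : IntegrableOn (fun x => Real.log 2 + Real.log (1 - Real.cos x))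
          (Ioc (0:ℝ) π) volume := by
        have := (intervalIntegrable_const (c := Real.log 2)).add integrable_log_one_sub_cos
        exact (intervalIntegrable_iff_integrableOn_Ioc_of_le hπ.le).mp this
      apply hg.congr_fun _ measurableSet_Ioc
      intro x hx
      have h1 : 0 < 1 - Real.cos x := one_sub_cos_pos hx.1 hx.2
      dsimp only
      rw [heq, show (1 + 1 ^ 2 - 2 * 1 * Real.cos x : ℝ) = 2 * (1 - Real.cos x) from by ring,
        Real.log_mul (by norm_num) h1.ne']
    · exact (cont hr0.le hlt).intervalIntegrable _ _
  have hJ : (∫ x in (0:ℝ)..π, Real.log (1 + r ^ 2 - 2 * r * Real.cos x)) = 0 := by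
    rcases eq_or_lt_of_le hr1 with heq | hlt
    · rw [heq]; exact J_one
    · exact J_zero hr0.le hlt
  rw [hcongr, intervalIntegral.integral_add intervalIntegrable_const hint, hJ,
    intervalIntegral.integral_const, smul_eq_mul, sub_zero,
    show (b^2 : ℝ) = b^(2:ℕ) by norm_num, Real.log_pow]
  push_cast; ring

end BronsteinAux

open Real in
/-- Bronstein integral: for positive reals `a, b`,
`∫₀^π log(a² + b² − 2ab cos x) dx = 2π log(max{a,b})`. -/
theorem bronstein_integral (a b : ℝ) (ha : 0 < a) (hb : 0 < b) :
    ∫ x in (0 : ℝ)..π, Real.log (a ^ 2 + b ^ 2 - 2 * a * b * Real.cos x) =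
      2 * π * Real.log (max a b) := by
  rcases le_total a b with h | h
  · rw [max_eq_right h]
    exact BronsteinAux.key a b ha hb h
  · rw [max_eq_left h, ← BronsteinAux.key b a hb ha h]
    apply intervalIntegral.integral_congr
    intro x _
    ring_nf
end
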